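/- Let M be a maximal ideal of a domain D such that the residue field D/M is not algebraically closed. Then for every ideal I of a ring of functions R from E to D, the set Z_M(I) = {f^{-1}(M) : f ∈ I} is closed under finite intersections: for all f, g ∈ I there exists h ∈ I with h^{-1}(M) = f^{-1}(M) ∩ g^{-1}(M). -/

import Mathlib

open Polynomial Finset in
lemma key5 {k : Type*} [Field k] (p : Polynomial k) (hm : p.Monic)
    (hr : ∀ x : k, ¬ p.IsRoot x) (hpos : 0 < p.natDegree) (a b : k) :
    (∑ i ∈ Finset.range (p.natDegree + 1), p.coeff i * a ^ i * b ^ (p.natDegree - i)) = 0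
      ↔ a = 0 ∧ b = 0 := by
  set n := p.natDegree with hn
  constructor
  · intro hS
    by_cases hb : b = 0
    · subst hb
      have : (∑ i ∈ Finset.range (n + 1), p.coeff i * a ^ i * (0:k) ^ (n - i))
          = p.coeff n * a ^ n := by
        refine Finset.sum_eq_single_of_mem (f := fun i => p.coeff i * a ^ i * (0:k) ^ (n - i)) n (Finset.self_mem_range_succ n) (fun i hi hne => ?_) |>.trans ?_
        swap
        · have hnn : (n:ℕ) - n = 0 := Nat.sub_self n
          simp [hnn]
        have : 0 < n - i := Nat.sub_pos_of_lt (lt_of_le_of_ne (Nat.lt_succ_iff.mp (Finset.mem_range.mp hi)) hne)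
        simp [zero_pow this.ne']
      rw [this, hm.coeff_natDegree, one_mul] at hS
      exact ⟨pow_eq_zero_iff hpos.ne' |>.mp hS, rfl⟩
    · exfalso
      apply hr (a * b⁻¹)
      have hb' : (b:k) ^ n ≠ 0 := pow_ne_zero _ hb
      have heval : p.eval (a * b⁻¹) = ∑ i ∈ Finset.range (n + 1), p.coeff i * (a * b⁻¹) ^ i :=
        by rw [eval_eq_sum_range]
      have hmul : b ^ n * p.eval (a * b⁻¹) = 0 := by
        rw [heval, Finset.mul_sum, ← hS]
        refine Finset.sum_congr rfl fun i hi => ?_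
        have hile : i ≤ n := Nat.lt_succ_iff.mp (Finset.mem_range.mp hi)
        have : b ^ n = b ^ (n - i) * b ^ i := by rw [← pow_add, Nat.sub_add_cancel hile]
        rw [mul_pow, inv_pow, this]
        field_simp
      have := mul_eq_zero.mp hmul
      tauto
  · rintro ⟨rfl, rfl⟩
    refine Finset.sum_eq_zero fun i hi => ?_
    rcases Nat.eq_zero_or_pos i with rfl | hi'
    · simp [zero_pow hpos.ne']
    · rw [zero_pow hi'.ne', mul_zero, zero_mul]

set_option synthInstance.maxHeartbeats 1000000 in
set_option maxHeartbeats 1000000 in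
theorem stmt5 {D : Type*} [CommRing D] [IsDomain D] {E : Set D}
    (R : Subring (↥E → D)) (hconst : ∀ d : D, (fun _ : ↥E => d) ∈ R)
    (M : Ideal D) [hM : M.IsMaximal] (halg : ¬ @IsAlgClosed (D ⧸ M) (Ideal.Quotient.field M)) :
    ∀ I : Ideal R, ∀ f ∈ I, ∀ g ∈ I, ∃ h ∈ I,
      {e : ↥E | (h : ↥E → D) e ∈ M} =
        {e : ↥E | (f : ↥E → D) e ∈ M} ∩ {e : ↥E | (g : ↥E → D) e ∈ M} := by
  intro I f hf g hg
  letI : Field (D ⧸ M) := Ideal.Quotient.field M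
  have hex : ¬ ∀ p : Polynomial (D ⧸ M), p.Monic → Irreducible p → ∃ x, p.IsRoot x :=
    fun hAll => halg (IsAlgClosed.of_exists_root _ hAll)
  push_neg at hex
  obtain ⟨p, hmonic, hirr, hroot⟩ := hex
  have hpos : 0 < p.natDegree := hirr.natDegree_pos
  set n := p.natDegree with hn
  -- lift the coefficients
  choose d hd using fun i => Ideal.Quotient.mk_surjective (I := M) (p.coeff i)
  -- the element h
  set cst : ℕ → R := fun i => ⟨fun _ => d i, hconst (d i)⟩ with hcst
  set h : R := ∑ i ∈ Finset.range (n + 1), cst i * f ^ i * g ^ (n - i) with hh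
  refine ⟨h, ?_, ?_⟩
  · refine Ideal.sum_mem _ fun i hi => ?_
    rcases Nat.eq_zero_or_pos i with rfl | hi'
    · obtain ⟨m, hm⟩ : ∃ m, n - 0 = m + 1 := ⟨n - 1, by omega⟩
      rw [hm, pow_succ, ← mul_assoc]
      exact I.mul_mem_left _ hg
    · obtain ⟨j, hj⟩ : ∃ j, i = j + 1 := ⟨i - 1, by omega⟩
      rw [hj, pow_succ]
      have : cst (j+1) * (f ^ j * f) * g ^ (n - (j+1))
          = (cst (j+1) * f ^ j * g ^ (n - (j+1))) * f := by ring
      rw [this]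
      exact I.mul_mem_left _ hf
  · ext e
    set φ : R →+* D := (Pi.evalRingHom (fun _ : ↥E => D) e).comp R.subtype with hφ
    have hφh : φ h = ∑ i ∈ Finset.range (n + 1), d i * ((f : ↥E → D) e) ^ i
        * ((g : ↥E → D) e) ^ (n - i) := by
      rw [hh, map_sum]
      refine Finset.sum_congr rfl fun i _ => ?_
      rw [map_mul, map_mul, map_pow, map_pow]
      rfl
    have hφh' : (h : ↥E → D) e = φ h := rfl
    have hkey := key5 p hmonic hroot hpos
        (Ideal.Quotient.mk M ((f : ↥E → D) e)) (Ideal.Quotient.mk M ((g : ↥E → D) e))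
    have hmkh : Ideal.Quotient.mk M ((h : ↥E → D) e)
        = ∑ i ∈ Finset.range (n + 1), p.coeff i
          * (Ideal.Quotient.mk M ((f : ↥E → D) e)) ^ i
          * (Ideal.Quotient.mk M ((g : ↥E → D) e)) ^ (n - i) := by
      rw [hφh', hφh, map_sum]
      refine Finset.sum_congr rfl fun i _ => ?_
      rw [map_mul, map_mul, map_pow, map_pow, hd]
    simp only [Set.mem_setOf_eq, Set.mem_inter_iff]
    rw [← Ideal.Quotient.eq_zero_iff_mem, ← Ideal.Quotient.eq_zero_iff_mem,
      ← Ideal.Quotient.eq_zero_iff_mem, hmkh]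
    exact hkey
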